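/- In any Ł_n-model M, the box-star unfolding axiom is valid at value 1: for every state s, 𝓘_M([π*]φ, s) ≤ 𝓘_M(φ ∧ [π][π*]φ, s), where R_{π*} = ⋁_{m≥0} R_π^(m) with R^(0) = ι and R^(m+1) = ι ∪ (R ∘ R^(m)). -/
import Mathlib


/-- The finite Łukasiewicz chain Ł_n as a subset of ℚ. -/
def Luk (n : ℕ) : Set ℚ := {x | ∃ k : ℕ, k ≤ n - 1 ∧ x = (k : ℚ) / ((n : ℚ) - 1)}

/-- Łukasiewicz t-norm. -/
def lodot (a b : ℚ) : ℚ := max 0 (a + b - 1)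

/-- Łukasiewicz implication. -/
def limp (a b : ℚ) : ℚ := min 1 (1 - a + b)

variable {S : Type} [Fintype S] [DecidableEq S]

/-- Join of a finitely-indexed family (empty join is 0, the bottom of Ł_n). -/
def qSup {α : Type} (A : Finset α) (g : α → ℚ) : ℚ := A.fold max 0 g

/-- Meet of a finitely-indexed family (empty meet is 1, the top of Ł_n). -/
def qInf {α : Type} (A : Finset α) (g : α → ℚ) : ℚ := A.fold min 1 g

/-- Iterated Łukasiewicz t-norm over a finite index set (empty product is 1). -/
noncomputable def bigOdot (U : Finset S) (g : S → ℚ) : ℚ :=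
  U.toList.foldr (fun u acc => lodot (g u) acc) 1

/-- A reachable Ł_n-relation: all values lie in the chain Ł_n. -/
def Reachable (n : ℕ) (R : S → Finset S → ℚ) : Prop := ∀ s T, R s T ∈ Luk n

/-- Composition of reachable relations. -/
noncomputable def comp (R Q : S → Finset S → ℚ) (s : S) (T : Finset S) : ℚ :=
  qSup Finset.univ (fun U : Finset S =>
    qSup ((Finset.univ : Finset (S → Finset S)).filter (fun f => U.biUnion f = T))
      (fun f => lodot (R s U) (bigOdot U (fun u => Q u (f u)))))

/-- Union of reachable relations. -/
def runion (R R' : S → Finset S → ℚ) (s : S) (T : Finset S) : ℚ := max (R s T) (R' s T)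

/-- The identity reachable relation ι. -/
def iota (s : S) (T : Finset S) : ℚ := if T = {s} then 1 else 0

/-- Finite iterations: R^(0) = ι, R^(m+1) = ι ∪ (R ∘ R^(m)). -/
noncomputable def rpow (R : S → Finset S → ℚ) : ℕ → (S → Finset S → ℚ)
  | 0 => iota
  | m + 1 => runion iota (comp R (rpow R m))

/-- Interpretation of box: ⋀_{T⊆S} (R(s,T) → ⋀_{t∈T} v(t)). -/
def box (R : S → Finset S → ℚ) (v : S → ℚ) (s : S) : ℚ :=
  qInf Finset.univ (fun T : Finset S => limp (R s T) (qInf T v))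

/-- Interpretation of diamond: ⋁_{T⊆S} (R(s,T) ⊙ ⋀_{t∈T} v(t)). -/
def dia (R : S → Finset S → ℚ) (v : S → ℚ) (s : S) : ℚ :=
  qSup Finset.univ (fun T : Finset S => lodot (R s T) (qInf T v))

/-- Test relation: value of φ at s if T = {s}, else 0. -/
def tst (a : S → ℚ) (s : S) (T : Finset S) : ℚ := if T = {s} then a s else 0

section Helpers

lemma qInf_le' {α : Type} {A : Finset α} (g : α → ℚ) {a : α} (h : a ∈ A) :
    qInf A g ≤ g a := (Finset.fold_min_le _).2 (Or.inr ⟨a, h, le_rfl⟩)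

lemma qInf_le_one' {α : Type} (A : Finset α) (g : α → ℚ) : qInf A g ≤ 1 :=
  (Finset.fold_min_le _).2 (Or.inl le_rfl)

lemma le_qInf' {α : Type} {A : Finset α} {g : α → ℚ} {c : ℚ}
    (h1 : c ≤ 1) (h2 : ∀ a ∈ A, c ≤ g a) : c ≤ qInf A g :=
  (Finset.le_fold_min _).2 ⟨h1, h2⟩

lemma le_qSup' {α : Type} {A : Finset α} (g : α → ℚ) {a : α} (h : a ∈ A) :
    g a ≤ qSup A g := (Finset.le_fold_max _).2 (Or.inr ⟨a, h, le_rfl⟩)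

lemma qSup_le' {α : Type} {A : Finset α} {g : α → ℚ} {c : ℚ}
    (h1 : 0 ≤ c) (h2 : ∀ a ∈ A, g a ≤ c) : qSup A g ≤ c :=
  (Finset.fold_max_le _).2 ⟨h1, h2⟩

lemma qInf_anti {α : Type} {A B : Finset α} (g : α → ℚ) (h : A ⊆ B) :
    qInf B g ≤ qInf A g :=
  le_qInf' (qInf_le_one' _ _) (fun a ha => qInf_le' g (h ha))

lemma luk_bounds {n : ℕ} (hn : 2 ≤ n) {x : ℚ} (h : x ∈ Luk n) : 0 ≤ x ∧ x ≤ 1 := by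
  obtain ⟨k, hk, rfl⟩ := h
  have hn1 : (1:ℚ) ≤ (n:ℚ) - 1 := by
    have : (2:ℚ) ≤ (n:ℚ) := by exact_mod_cast hn
    linarith
  have hpos : (0:ℚ) < (n:ℚ) - 1 := by linarith
  constructor
  · positivity
  · rw [div_le_one hpos]
    have : (k:ℚ) ≤ ((n - 1 : ℕ) : ℚ) := by exact_mod_cast hk
    rwa [Nat.cast_sub (by omega), Nat.cast_one] at this

lemma lodot_nonneg (a b : ℚ) : 0 ≤ lodot a b := le_max_left _ _

lemma lodot_le_one {a b : ℚ} (ha : a ≤ 1) (hb : b ≤ 1) : lodot a b ≤ 1 := by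
  unfold lodot; rcases max_cases 0 (a + b - 1) with ⟨h, _⟩ | ⟨h, _⟩ <;> linarith

section Sfin
variable {S : Type} [Fintype S] [DecidableEq S]

lemma foldr_lodot_bounds (g : S → ℚ) :
    ∀ l : List S, (∀ u ∈ l, 0 ≤ g u ∧ g u ≤ 1) →
      0 ≤ l.foldr (fun u acc => lodot (g u) acc) 1 ∧
        l.foldr (fun u acc => lodot (g u) acc) 1 ≤ 1 := by
  intro l hl
  induction l with
  | nil => simp
  | cons x l ih =>
    have hx := hl x (by simp)
    have ih' := ih (fun u hu => hl u (List.mem_cons_of_mem _ hu))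
    exact ⟨lodot_nonneg _ _, lodot_le_one hx.2 ih'.2⟩

lemma bigOdot_bounds (U : Finset S) (g : S → ℚ) (h : ∀ u ∈ U, 0 ≤ g u ∧ g u ≤ 1) :
    0 ≤ bigOdot U g ∧ bigOdot U g ≤ 1 :=
  foldr_lodot_bounds g U.toList (fun u hu => h u (Finset.mem_toList.1 hu))

lemma foldr_lodot_all_one (g : S → ℚ) :
    ∀ l : List S, (∀ u ∈ l, g u = 1) →
      l.foldr (fun u acc => lodot (g u) acc) 1 = 1 := by
  intro l hl
  induction l with
  | nil => rfl
  | cons x l ih =>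
    have hx := hl x (by simp)
    have ih' := ih (fun u hu => hl u (List.mem_cons_of_mem _ hu))
    simp only [List.foldr_cons, ih', hx]
    simp [lodot]

lemma foldr_lodot_single (g : S → ℚ) (t : S) (ht0 : 0 ≤ g t) :
    ∀ l : List S, t ∈ l → l.Nodup → (∀ u ∈ l, u ≠ t → g u = 1) →
      l.foldr (fun u acc => lodot (g u) acc) 1 = g t := by
  intro l
  induction l with
  | nil => simp
  | cons x l ih =>
    intro hmem hnd hone
    rcases List.mem_cons.1 hmem with rfl | hmem'
    · have hall : ∀ u ∈ l, g u = 1 := by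
        intro u hu
        exact hone u (List.mem_cons_of_mem _ hu)
          (fun h => (List.nodup_cons.1 hnd).1 (h ▸ hu))
      simp only [List.foldr_cons, foldr_lodot_all_one g l hall]
      simp [lodot, max_eq_right ht0]
    · have hx : g x = 1 := hone x (by simp)
        (fun h => (List.nodup_cons.1 hnd).1 (h ▸ hmem'))
      have := ih hmem' (List.nodup_cons.1 hnd).2
        (fun u hu hne => hone u (List.mem_cons_of_mem _ hu) hne)
      simp only [List.foldr_cons, this, hx]
      simp [lodot, max_eq_right ht0]

lemma bigOdot_single (U : Finset S) (g : S → ℚ) {t : S} (ht : t ∈ U) (ht0 : 0 ≤ g t)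
    (hone : ∀ u ∈ U, u ≠ t → g u = 1) : bigOdot U g = g t :=
  foldr_lodot_single g t ht0 U.toList (Finset.mem_toList.2 ht) U.nodup_toList
    (fun u hu => hone u (Finset.mem_toList.1 hu))

lemma rpow_bounds {n : ℕ} (hn : 2 ≤ n) {R : S → Finset S → ℚ} (hR : Reachable n R) :
    ∀ m s T, 0 ≤ rpow R m s T ∧ rpow R m s T ≤ 1 := by
  intro m
  induction m with
  | zero =>
    intro s T
    simp only [rpow, iota]
    split <;> norm_num
  | succ m ih =>
    intro s T
    simp only [rpow, runion]
    constructor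
    · have : (0:ℚ) ≤ iota s T := by unfold iota; split <;> norm_num
      exact le_trans this (le_max_left _ _)
    · apply max_le
      · unfold iota; split <;> norm_num
      · apply qSup_le' zero_le_one
        intro U _
        apply qSup_le' zero_le_one
        intro f _
        exact lodot_le_one (luk_bounds hn (hR s U)).2
          (bigOdot_bounds U _ (fun u _ => ih u (f u))).2

lemma rpow_self_one (R : S → Finset S → ℚ) : ∀ m s, (1:ℚ) ≤ rpow R m s {s} := by
  intro m s
  cases m with
  | zero => simp [rpow, iota]
  | succ m =>
    simp only [rpow, runion]
    exact le_trans (by simp [iota]) (le_max_left _ _)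

end Sfin

lemma limp_mono {a a' b b' : ℚ} (h1 : a' ≤ a) (h2 : b ≤ b') : limp a b ≤ limp a' b' :=
  min_le_min le_rfl (by linarith)

lemma limp_le_one (a b : ℚ) : limp a b ≤ 1 := min_le_left _ _

lemma key_arith {a b c X : ℚ} (ha : a ≤ 1) (hb : 0 ≤ b)
    (hX : X ≤ limp (lodot a c) b) : X + a - 1 ≤ limp c b := by
  unfold limp lodot at *
  rcases max_cases 0 (a + c - 1) with ⟨h1, h2⟩ | ⟨h1, h2⟩ <;>
    rw [h1] at hX <;>
    rcases min_cases 1 (1 - c + b) with ⟨h3, h4⟩ | ⟨h3, h4⟩ <;>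
      rw [h3] <;>
      rcases le_total X 1 with h5 | h5 <;>
      · have := le_trans hX (min_le_right _ _)
        have := le_trans hX (min_le_left _ _)
        linarith

end Helpers

set_option maxHeartbeats 1000000 in
theorem box_star_unfold (n : ℕ) (hn : 2 ≤ n) {S : Type} [Fintype S] [DecidableEq S]
    (R : S → Finset S → ℚ) (hR : Reachable n R)
    (Rstar : S → Finset S → ℚ)
    (hub : ∀ (m : ℕ) (s : S) (T : Finset S), rpow R m s T ≤ Rstar s T)
    (hattained : ∀ (s : S) (T : Finset S), ∃ m : ℕ, Rstar s T = rpow R m s T)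
    (v : S → ℚ) (hv : ∀ t, v t ∈ Luk n) :
    ∀ s, box Rstar v s ≤ min (v s) (box R (box Rstar v) s) := by
  intro s
  have hRb : ∀ s T, 0 ≤ R s T ∧ R s T ≤ 1 := fun s T => luk_bounds hn (hR s T)
  have hstarb : ∀ s T, 0 ≤ Rstar s T ∧ Rstar s T ≤ 1 := by
    intro s T
    obtain ⟨m, hm⟩ := hattained s T
    rw [hm]; exact rpow_bounds hn hR m s T
  refine le_min ?_ ?_
  · -- box Rstar v s ≤ v s
    have h1 : (1:ℚ) ≤ Rstar s {s} := le_trans (rpow_self_one R 0 s) (hub 0 s {s})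
    have h2 : box Rstar v s ≤ limp (Rstar s {s}) (qInf {s} v) :=
      qInf_le' _ (Finset.mem_univ ({s} : Finset S))
    have h3 : qInf ({s} : Finset S) v ≤ v s := qInf_le' v (Finset.mem_singleton_self s)
    have h4 := le_trans h2 (min_le_right _ _)
    unfold limp at h4
    linarith
  · -- box Rstar v s ≤ box R (box Rstar v) s
    have hbox1 : box Rstar v s ≤ 1 := qInf_le_one' _ _
    apply le_qInf' hbox1
    intro T _
    refine le_min hbox1 ?_
    have hkey : box Rstar v s + R s T - 1 ≤ qInf T (box Rstar v) := by
      apply le_qInf' (by linarith [(hRb s T).2])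
      intro t ht
      have hboxt1 : (box Rstar v s + R s T - 1 : ℚ) ≤ 1 := by linarith [(hRb s T).2]
      apply le_qInf' hboxt1
      intro T' _
      obtain ⟨m, hm⟩ := hattained t T'
      set f : S → Finset S := fun u => if u = t then T' else {u} with hf
      set W : Finset S := T.biUnion f with hWdef
      have hfT : f t = T' := if_pos rfl
      have hT'W : T' ⊆ W := hfT ▸ Finset.subset_biUnion_of_mem f ht
      -- bigOdot T (fun u => rpow R m u (f u)) = Rstar t T'
      have hbig : bigOdot T (fun u => rpow R m u (f u)) = Rstar t T' := by
        rw [hm, show rpow R m t T' = rpow R m t (f t) from by rw [hfT]]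
        apply bigOdot_single T _ ht
        · exact (rpow_bounds hn hR m t (f t)).1
        · intro u _ hne
          have : f u = {u} := if_neg hne
          rw [this]
          exact le_antisymm (rpow_bounds hn hR m u {u}).2 (rpow_self_one R m u)
      -- lodot (R s T) (Rstar t T') ≤ Rstar s W
      have hcomp : lodot (R s T) (Rstar t T') ≤ Rstar s W := by
        have hfmem : f ∈ (Finset.univ : Finset (S → Finset S)).filter
            (fun f => T.biUnion f = W) :=
          Finset.mem_filter.2 ⟨Finset.mem_univ f, rfl⟩
        have h5 : lodot (R s T) (bigOdot T (fun u => rpow R m u (f u))) ≤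
            comp R (rpow R m) s W := by
          unfold comp
          refine le_trans ?_ (le_qSup' _ (Finset.mem_univ T))
          exact le_qSup' _ hfmem
        rw [hbig] at h5
        refine le_trans h5 (le_trans ?_ (hub (m+1) s W))
        simp only [rpow, runion]
        exact le_max_right _ _
      have hb0 : 0 ≤ qInf T' v := by
        apply le_qInf' zero_le_one
        intro a _
        exact (luk_bounds hn (hv a)).1
      have h6 : box Rstar v s ≤ limp (Rstar s W) (qInf W v) :=
        qInf_le' _ (Finset.mem_univ W)
      have h7 : box Rstar v s ≤ limp (lodot (R s T) (Rstar t T')) (qInf T' v) :=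
        le_trans h6 (limp_mono hcomp (qInf_anti v hT'W))
      have := key_arith (hRb s T).2 hb0 h7
      linarith
    linarith
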